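/- Let (a_j)_{j∈ℕ} be a sequence of nonnegative real numbers for which there exist constants c₁ > 0 and C₀ > 0 such that for every R ≥ 0 the set {j ∈ ℕ : a_j ≤ R} is finite with | #{j : a_j ≤ R} − c₁ R² | ≤ C₀(1 + R). Then there exists a constant C > 0 (depending only on c₁ and C₀) such that for every ξ ∈ ℝ: ∑_{j∈ℕ} (1 + |a_j − ξ|)^{−3} ≤ C (1 + |ξ|). -/

import Mathlib

open Real Set

theorem shifted_sum_bound
    (a : ℕ → ℝ) (ha : ∀ j, 0 ≤ a j)
    (c₁ C₀ : ℝ) (hc₁ : 0 < c₁) (hC₀ : 0 < C₀)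
    (hcount : ∀ R : ℝ, 0 ≤ R → {j : ℕ | a j ≤ R}.Finite ∧
      |({j : ℕ | a j ≤ R}.ncard : ℝ) - c₁ * R ^ 2| ≤ C₀ * (1 + R)) :
    ∃ C : ℝ, 0 < C ∧ ∀ ξ : ℝ,
      Summable (fun j : ℕ => (1 + |a j - ξ|) ^ (-3 : ℝ)) ∧
      ∑' j : ℕ, (1 + |a j - ξ|) ^ (-3 : ℝ) ≤ C * (1 + |ξ|) := by
  set M : ℝ := 4 * c₁ + 4 * C₀ with hMdef
  have hM : 0 < M := by positivity
  -- unit interval bound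
  have hunit : ∀ t : ℝ, ({j : ℕ | t ≤ a j ∧ a j ≤ t + 1}).Finite ∧
      (({j : ℕ | t ≤ a j ∧ a j ≤ t + 1}).ncard : ℝ) ≤ M * (1 + |t|) := by
    intro t
    rcases le_or_gt t 1 with ht | ht
    · rcases lt_or_ge (t + 1) 0 with ht0 | ht0
      · have he : {j : ℕ | t ≤ a j ∧ a j ≤ t + 1} = ∅ := by
          ext j
          simp only [mem_setOf_eq, mem_empty_iff_false, iff_false, not_and, not_le]
          intro _
          linarith [ha j]
        rw [he]
        refine ⟨finite_empty, ?_⟩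
        simp only [Set.ncard_empty, Nat.cast_zero]
        positivity
      · obtain ⟨hfin2, hb2⟩ := hcount 2 (by norm_num)
        have hsub : {j : ℕ | t ≤ a j ∧ a j ≤ t + 1} ⊆ {j : ℕ | a j ≤ 2} := by
          intro j hj
          simp only [mem_setOf_eq] at hj ⊢
          linarith [hj.2]
        refine ⟨hfin2.subset hsub, ?_⟩
        have hle : ({j : ℕ | t ≤ a j ∧ a j ≤ t + 1}).ncard ≤ ({j : ℕ | a j ≤ 2}).ncard :=
          Set.ncard_le_ncard hsub hfin2
        have hle' : (({j : ℕ | t ≤ a j ∧ a j ≤ t + 1}).ncard : ℝ)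
            ≤ (({j : ℕ | a j ≤ 2}).ncard : ℝ) := by exact_mod_cast hle
        have habs := abs_le.1 hb2
        have h0 : 0 ≤ |t| := abs_nonneg t
        nlinarith [habs.2]
    · -- t > 1
      obtain ⟨hfinA, hbA⟩ := hcount (t + 1) (by linarith)
      obtain ⟨hfinB, hbB⟩ := hcount (t - 1) (by linarith)
      have hBA : {j : ℕ | a j ≤ t - 1} ⊆ {j : ℕ | a j ≤ t + 1} := by
        intro j hj; simp only [mem_setOf_eq] at hj ⊢; linarith
      have hsub : {j : ℕ | t ≤ a j ∧ a j ≤ t + 1}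
          ⊆ {j : ℕ | a j ≤ t + 1} \ {j : ℕ | a j ≤ t - 1} := by
        intro j hj
        simp only [mem_setOf_eq, mem_diff, not_le] at hj ⊢
        exact ⟨hj.2, by linarith [hj.1]⟩
      refine ⟨hfinA.diff.subset hsub, ?_⟩
      have hle : ({j : ℕ | t ≤ a j ∧ a j ≤ t + 1}).ncard
          ≤ ({j : ℕ | a j ≤ t + 1} \ {j : ℕ | a j ≤ t - 1}).ncard :=
        Set.ncard_le_ncard hsub hfinA.diff
      rw [Set.ncard_diff hBA (hfinB)] at hle
      have hmono : ({j : ℕ | a j ≤ t - 1}).ncard ≤ ({j : ℕ | a j ≤ t + 1}).ncard :=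
        Set.ncard_le_ncard hBA hfinA
      have hle' : (({j : ℕ | t ≤ a j ∧ a j ≤ t + 1}).ncard : ℝ)
          ≤ (({j : ℕ | a j ≤ t + 1}).ncard : ℝ) - (({j : ℕ | a j ≤ t - 1}).ncard : ℝ) := by
        have := Nat.cast_sub (R := ℝ) hmono
        calc (({j : ℕ | t ≤ a j ∧ a j ≤ t + 1}).ncard : ℝ)
            ≤ ((({j : ℕ | a j ≤ t + 1}).ncard - ({j : ℕ | a j ≤ t - 1}).ncard : ℕ) : ℝ) := by
              exact_mod_cast hle
          _ = _ := this
      have habsA := abs_le.1 hbA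
      have habsB := abs_le.1 hbB
      have htabs : |t| = t := abs_of_pos (by linarith)
      rw [htabs]
      nlinarith [habsA.2, habsB.1]
  -- summability of the comparison series
  have hBsum : Summable (fun k : ℕ => ((1 : ℝ) + k) ^ (-2 : ℝ)) := by
    have h := (Real.summable_nat_rpow (p := (-2 : ℝ))).2 (by norm_num)
    have h2 := h.comp_injective Nat.succ_injective
    refine h2.congr fun k => ?_
    simp only [Function.comp_apply]
    congr 1
    push_cast
    ring
  set B : ℝ := ∑' k : ℕ, ((1 : ℝ) + k) ^ (-2 : ℝ) with hBdef
  have hB0 : 0 ≤ B := tsum_nonneg fun k => Real.rpow_nonneg (by positivity) _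
  have hB1 : (0 : ℝ) < B + 1 := by linarith
  refine ⟨3 * M * (B + 1), mul_pos (by positivity) hB1, fun ξ => ?_⟩
  set f : ℕ → ℝ := fun j => (1 + |a j - ξ|) ^ (-3 : ℝ) with hfdef
  have hf0 : ∀ j, 0 ≤ f j := fun j => Real.rpow_nonneg (by positivity) _
  set g : ℕ → ENNReal := fun j => ENNReal.ofReal (f j) with hgdef
  -- fiber bound
  have hfib : ∀ k : ℕ, ({j : ℕ | ⌊|a j - ξ|⌋₊ = k}).Finite ∧
      (({j : ℕ | ⌊|a j - ξ|⌋₊ = k}).ncard : ℝ) ≤ 3 * M * (1 + |ξ|) * (1 + k) := by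
    intro k
    obtain ⟨hf1, hb1⟩ := hunit (ξ + k)
    obtain ⟨hf2, hb2⟩ := hunit (ξ - (k + 1))
    have hsub : {j : ℕ | ⌊|a j - ξ|⌋₊ = k} ⊆
        {j : ℕ | ξ + k ≤ a j ∧ a j ≤ ξ + k + 1} ∪
        {j : ℕ | ξ - (k + 1) ≤ a j ∧ a j ≤ ξ - (k + 1) + 1} := by
      intro j hj
      simp only [mem_setOf_eq] at hj
      have hk1 : (k : ℝ) ≤ |a j - ξ| := by
        rw [← hj]; exact Nat.floor_le (abs_nonneg _)
      have hk2 : |a j - ξ| < k + 1 := by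
        have := Nat.lt_floor_add_one |a j - ξ|
        rw [hj] at this
        exact this
      rcases le_or_gt ξ (a j) with hc | hc
      · left
        rw [abs_of_nonneg (by linarith)] at hk1 hk2
        simp only [mem_setOf_eq]
        constructor <;> linarith
      · right
        rw [abs_of_neg (by linarith)] at hk1 hk2
        simp only [mem_setOf_eq]
        constructor <;> linarith
    refine ⟨(hf1.union hf2).subset hsub, ?_⟩
    have hle := Set.ncard_le_ncard hsub (hf1.union hf2)
    have hle2 := Set.ncard_union_le {j : ℕ | ξ + k ≤ a j ∧ a j ≤ ξ + k + 1}
        {j : ℕ | ξ - (k + 1) ≤ a j ∧ a j ≤ ξ - (k + 1) + 1}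
    have hle' : (({j : ℕ | ⌊|a j - ξ|⌋₊ = k}).ncard : ℝ)
        ≤ (({j : ℕ | ξ + k ≤ a j ∧ a j ≤ ξ + k + 1}).ncard : ℝ)
          + (({j : ℕ | ξ - (k + 1) ≤ a j ∧ a j ≤ ξ - (k + 1) + 1}).ncard : ℝ) := by
      exact_mod_cast hle.trans hle2
    have h1 : |ξ + (k : ℝ)| ≤ |ξ| + k := (abs_add_le _ _).trans (by simp)
    have h2 : |ξ - ((k : ℝ) + 1)| ≤ |ξ| + (k + 1) := by
      refine (abs_sub _ _).trans ?_
      rw [abs_of_nonneg (by positivity : (0:ℝ) ≤ (k : ℝ) + 1)]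
    have hk0 : (0 : ℝ) ≤ k := Nat.cast_nonneg k
    have hξ0 : (0 : ℝ) ≤ |ξ| := abs_nonneg ξ
    nlinarith [hb1, hb2, mul_le_mul_of_nonneg_left h1 hM.le,
      mul_le_mul_of_nonneg_left h2 hM.le,
      mul_nonneg (mul_nonneg hM.le hξ0) hk0,
      mul_nonneg hM.le hξ0, mul_nonneg hM.le hk0]
  -- ENNReal computation
  have key : ∑' j : ℕ, g j ≤ ENNReal.ofReal ((3 * M * (1 + |ξ|)) * B) := by
    have step1 : ∑' j : ℕ, g j
        = ∑' (k : ℕ) (j : ℕ), (if ⌊|a j - ξ|⌋₊ = k then g j else 0) := by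
      rw [ENNReal.tsum_comm]
      refine tsum_congr fun j => ?_
      have h1 : ∀ k : ℕ, (if ⌊|a j - ξ|⌋₊ = k then g j else 0)
          = (if k = ⌊|a j - ξ|⌋₊ then g j else 0) := by
        intro k
        by_cases h : ⌊|a j - ξ|⌋₊ = k
        · simp [h]
        · simp [h, Ne.symm h]
      rw [tsum_congr h1, tsum_ite_eq]
    rw [step1]
    have step2 : ∀ k : ℕ, (∑' j : ℕ, if ⌊|a j - ξ|⌋₊ = k then g j else 0)
        ≤ ENNReal.ofReal ((3 * M * (1 + |ξ|)) * ((1 + (k : ℝ)) ^ (-2 : ℝ))) := by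
      intro k
      obtain ⟨hFfin, hFcard⟩ := hfib k
      have hpt : ∀ j : ℕ, (if ⌊|a j - ξ|⌋₊ = k then g j else 0)
          ≤ (if ⌊|a j - ξ|⌋₊ = k then ENNReal.ofReal ((1 + (k : ℝ)) ^ (-3 : ℝ)) else 0) := by
        intro j
        by_cases hj : ⌊|a j - ξ|⌋₊ = k
        · simp only [hj, if_true]
          apply ENNReal.ofReal_le_ofReal
          apply Real.rpow_le_rpow_of_nonpos (by positivity) ?_ (by norm_num)
          have hk1 : (k : ℝ) ≤ |a j - ξ| := by
            rw [← hj]; exact Nat.floor_le (abs_nonneg _)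
          linarith
        · simp [hj]
      refine le_trans (ENNReal.tsum_le_tsum hpt) ?_
      have hsum : (∑' j : ℕ, if ⌊|a j - ξ|⌋₊ = k then
            ENNReal.ofReal ((1 + (k : ℝ)) ^ (-3 : ℝ)) else 0)
          = (({j : ℕ | ⌊|a j - ξ|⌋₊ = k}).ncard : ENNReal)
            * ENNReal.ofReal ((1 + (k : ℝ)) ^ (-3 : ℝ)) := by
        rw [tsum_eq_sum (s := hFfin.toFinset)
          (by intro j hj
              simp only [Set.Finite.mem_toFinset, mem_setOf_eq] at hj
              simp [hj])]
        have hcongr : ∀ j ∈ hFfin.toFinset,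
            (if ⌊|a j - ξ|⌋₊ = k then ENNReal.ofReal ((1 + (k : ℝ)) ^ (-3 : ℝ)) else 0)
              = ENNReal.ofReal ((1 + (k : ℝ)) ^ (-3 : ℝ)) := by
          intro j hj
          simp only [Set.Finite.mem_toFinset, mem_setOf_eq] at hj
          simp [hj]
        rw [Finset.sum_congr rfl hcongr, Finset.sum_const, nsmul_eq_mul]
        congr 1
        rw [Set.ncard_eq_toFinset_card _ hFfin]
      rw [hsum]
      have hcast : (({j : ℕ | ⌊|a j - ξ|⌋₊ = k}).ncard : ENNReal)
          = ENNReal.ofReal (({j : ℕ | ⌊|a j - ξ|⌋₊ = k}).ncard : ℝ) := by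
        rw [ENNReal.ofReal_natCast]
      rw [hcast, ← ENNReal.ofReal_mul (Nat.cast_nonneg _)]
      apply ENNReal.ofReal_le_ofReal
      have hrw : (1 + (k : ℝ)) * (1 + (k : ℝ)) ^ (-3 : ℝ) = (1 + (k : ℝ)) ^ (-2 : ℝ) := by
        nth_rewrite 1 [← Real.rpow_one (1 + (k : ℝ))]
        rw [← Real.rpow_add (by positivity)]
        norm_num
      have hpow0 : 0 ≤ (1 + (k : ℝ)) ^ (-3 : ℝ) := Real.rpow_nonneg (by positivity) _
      calc (({j : ℕ | ⌊|a j - ξ|⌋₊ = k}).ncard : ℝ) * (1 + (k : ℝ)) ^ (-3 : ℝ)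
          ≤ (3 * M * (1 + |ξ|) * (1 + k)) * (1 + (k : ℝ)) ^ (-3 : ℝ) :=
            mul_le_mul_of_nonneg_right hFcard hpow0
        _ = (3 * M * (1 + |ξ|)) * ((1 + (k : ℝ)) * (1 + (k : ℝ)) ^ (-3 : ℝ)) := by ring
        _ = (3 * M * (1 + |ξ|)) * ((1 + (k : ℝ)) ^ (-2 : ℝ)) := by rw [hrw]
    refine le_trans (ENNReal.tsum_le_tsum step2) ?_
    have hA0 : 0 ≤ 3 * M * (1 + |ξ|) := by positivity
    have : ∀ k : ℕ, ENNReal.ofReal ((3 * M * (1 + |ξ|)) * ((1 + (k : ℝ)) ^ (-2 : ℝ)))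
        = ENNReal.ofReal (3 * M * (1 + |ξ|)) * ENNReal.ofReal ((1 + (k : ℝ)) ^ (-2 : ℝ)) :=
      fun k => ENNReal.ofReal_mul hA0
    rw [tsum_congr this, ENNReal.tsum_mul_left,
      ← ENNReal.ofReal_tsum_of_nonneg (fun k => Real.rpow_nonneg (by positivity) _) hBsum,
      ← ENNReal.ofReal_mul hA0]
  -- back to the reals
  have hgtop : ∑' j : ℕ, g j ≠ ⊤ := (lt_of_le_of_lt key ENNReal.ofReal_lt_top).ne
  have hsummable : Summable f := by
    have h := ENNReal.summable_toReal hgtop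
    refine h.congr fun j => ?_
    simp only [hgdef]
    rw [ENNReal.toReal_ofReal (hf0 j)]
  refine ⟨hsummable, ?_⟩
  have heq : ENNReal.ofReal (∑' j : ℕ, f j) = ∑' j : ℕ, g j :=
    ENNReal.ofReal_tsum_of_nonneg hf0 hsummable
  have hfin : ENNReal.ofReal (∑' j : ℕ, f j)
      ≤ ENNReal.ofReal (3 * M * (B + 1) * (1 + |ξ|)) := by
    rw [heq]
    refine key.trans (ENNReal.ofReal_le_ofReal ?_)
    have hξ0 : (0 : ℝ) ≤ |ξ| := abs_nonneg ξ
    nlinarith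
  have h0 : (0 : ℝ) ≤ 3 * M * (B + 1) * (1 + |ξ|) := by positivity
  exact (ENNReal.ofReal_le_ofReal_iff h0).1 hfin
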